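/- Let k be a field, 𝔤 a Lie algebra over k, 𝔥 ⊆ 𝔤 a nilpotent Lie subalgebra, and let ν be an additive map from the additive group of linear functionals χ : 𝔥 →ₗ[k] k to ℝ. Form the Laurent loop algebra 𝔤[t,t⁻¹] := k[t,t⁻¹] ⊗_k 𝔤, a Lie algebra over k[t,t⁻¹] (hence over k) with bracket satisfying ⁅f ⊗ v, g ⊗ w⁆ = fg ⊗ ⁅v,w⁆. For r ∈ ℝ define the k-submodules 𝔨_r := ⨆ { tⁱ · rootSpace(𝔥,χ) : χ a linear functional on 𝔥, i ∈ ℤ, ν(χ) + i ≥ r } and 𝔨_{r+} := ⨆ { tⁱ · rootSpace(𝔥,χ) : ν(χ) + i > r }, where tⁱ · M denotes the image of M under v ↦ tⁱ ⊗ v. Then for all r, s ∈ ℝ one has ⁅𝔨_r, 𝔨_s⁆ ⊆ 𝔨_{r+s} and ⁅𝔨_r, 𝔨_{s+}⁆ ⊆ 𝔨_{(r+s)+}. In particular, for every r ≥ 0 the submodules 𝔨_r and 𝔨_{r+} are Lie subalgebras of 𝔤[t,t⁻¹], and ⁅𝔨_0, 𝔨_{0+}⁆ ⊆ 𝔨_{0+},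 i.e. 𝔨_{0+} is an ideal in 𝔨_0. -/

import Mathlib

open scoped TensorProduct

open LieAlgebra LaurentPolynomial in
/-- Generic bracket lemma for the Moy–Prasad-type suprema: if the predicates `P`, `Q`, `S`
satisfy that `P χ₁ i` and `Q χ₂ j` imply `S (χ₁ + χ₂) (i + j)`, then the bracket of the
corresponding suprema lands in the supremum for `S`. -/
theorem stmt3_aux {k : Type*} [Field k] {g : Type*} [LieRing g] [LieAlgebra k g]
    (h : LieSubalgebra k g) [LieRing.IsNilpotent h]
    (P Q S : (h →ₗ[k] k) → ℤ → Prop)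
    (hPQ : ∀ χ₁ i χ₂ j, P χ₁ i → Q χ₂ j → S (χ₁ + χ₂) (i + j))
    {x y : LaurentPolynomial k ⊗[k] g}
    (hx : x ∈ ⨆ (χ : h →ₗ[k] k) (i : ℤ) (_ : P χ i),
        ((rootSpace h ⇑χ : LieSubmodule k h g) : Submodule k g).map
          (TensorProduct.mk k (LaurentPolynomial k) g (T i)))
    (hy : y ∈ ⨆ (χ : h →ₗ[k] k) (i : ℤ) (_ : Q χ i),
        ((rootSpace h ⇑χ : LieSubmodule k h g) : Submodule k g).map
          (TensorProduct.mk k (LaurentPolynomial k) g (T i))) :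
    ⁅x, y⁆ ∈ ⨆ (χ : h →ₗ[k] k) (i : ℤ) (_ : S χ i),
        ((rootSpace h ⇑χ : LieSubmodule k h g) : Submodule k g).map
          (TensorProduct.mk k (LaurentPolynomial k) g (T i)) := by
  -- flatten the triple suprema to single-index suprema
  have flatten : ∀ (R : (h →ₗ[k] k) → ℤ → Prop),
      (⨆ (χ : h →ₗ[k] k) (i : ℤ) (_ : R χ i),
        ((rootSpace h ⇑χ : LieSubmodule k h g) : Submodule k g).map
          (TensorProduct.mk k (LaurentPolynomial k) g (T i)))
      = ⨆ (p : {q : (h →ₗ[k] k) × ℤ // R q.1 q.2}),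
        ((rootSpace h ⇑p.1.1 : LieSubmodule k h g) : Submodule k g).map
          (TensorProduct.mk k (LaurentPolynomial k) g (T p.1.2)) := by
    intro R
    apply le_antisymm
    · exact iSup₂_le fun χ i => iSup_le fun hp => le_iSup
        (fun p : {q : (h →ₗ[k] k) × ℤ // R q.1 q.2} =>
          ((rootSpace h ⇑p.1.1 : LieSubmodule k h g) : Submodule k g).map
            (TensorProduct.mk k (LaurentPolynomial k) g (T p.1.2))) ⟨(χ, i), hp⟩
    · refine iSup_le fun p => ?_
      obtain ⟨⟨χ, i⟩, hp⟩ := p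
      exact le_iSup_of_le χ <| le_iSup_of_le i <| le_iSup_of_le hp le_rfl
  rw [flatten P] at hx
  rw [flatten Q] at hy
  rw [flatten S]
  induction hx using Submodule.iSup_induction' with
  | mem p x hxmem =>
    induction hy using Submodule.iSup_induction' with
    | mem q y hymem =>
      obtain ⟨⟨χ₁, i⟩, hp⟩ := p
      obtain ⟨⟨χ₂, j⟩, hq⟩ := q
      obtain ⟨v, hv, rfl⟩ := hxmem
      obtain ⟨w, hw, rfl⟩ := hymem
      have hbr : ⁅(TensorProduct.mk k (LaurentPolynomial k) g (T i)) v,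
          (TensorProduct.mk k (LaurentPolynomial k) g (T j)) w⁆
          = (TensorProduct.mk k (LaurentPolynomial k) g (T (i + j))) ⁅v, w⁆ := by
        simp only [TensorProduct.mk_apply]
        rw [LieAlgebra.ExtendScalars.bracket_tmul, T_add]
      rw [hbr]
      have hvw : ⁅v, w⁆ ∈ (rootSpace h ⇑(χ₁ + χ₂) : LieSubmodule k h g) := by
        have : (⇑(χ₁ + χ₂) : h → k) = ⇑χ₁ + ⇑χ₂ := by ext z; simp
        rw [this]
        exact LieAlgebra.lie_mem_genWeightSpace_of_mem_genWeightSpace hv hw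
      refine Submodule.mem_iSup_of_mem ⟨(χ₁ + χ₂, i + j), hPQ χ₁ i χ₂ j hp hq⟩ ?_
      exact Submodule.mem_map_of_mem hvw
    | zero =>
      have e : ⁅x, (0 : LaurentPolynomial k ⊗[k] g)⁆ = 0 := lie_zero x
      rw [e]; exact Submodule.zero_mem _
    | add y₁ y₂ _ _ ih₁ ih₂ =>
      have e : ⁅x, y₁ + y₂⁆ = ⁅x, y₁⁆ + ⁅x, y₂⁆ := lie_add x y₁ y₂
      rw [e]; exact Submodule.add_mem _ ih₁ ih₂
  | zero =>
    have e : ⁅(0 : LaurentPolynomial k ⊗[k] g), y⁆ = 0 := zero_lie y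
    rw [e]; exact Submodule.zero_mem _
  | add x₁ x₂ _ _ ih₁ ih₂ =>
    have e : ⁅x₁ + x₂, y⁆ = ⁅x₁, y⁆ + ⁅x₂, y⁆ := add_lie x₁ x₂ y
    rw [e]; exact Submodule.add_mem _ ih₁ ih₂

/-- Moy–Prasad-type filtration on the Laurent loop algebra `k[t,t⁻¹] ⊗ₖ 𝔤`.  For a nilpotent Lie
subalgebra `𝔥 ⊆ 𝔤` and an additive map `ν` from linear functionals on `𝔥` to `ℝ`, set
`𝔨 r = ⨆ {ν χ + i ≥ r} tⁱ · rootSpace(𝔥,χ)` and `𝔨₊ r = ⨆ {ν χ + i > r} tⁱ · rootSpace(𝔥,χ)`.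
Then `⁅𝔨 r, 𝔨 s⁆ ⊆ 𝔨 (r+s)` and `⁅𝔨 r, 𝔨₊ s⁆ ⊆ 𝔨₊ (r+s)`; in particular, for `r ≥ 0` both
`𝔨 r` and `𝔨₊ r` are closed under the bracket (hence are Lie subalgebras), and `𝔨₊ 0` is an
ideal in `𝔨 0`. -/
theorem stmt3 {k : Type*} [Field k] {g : Type*} [LieRing g] [LieAlgebra k g]
    (h : LieSubalgebra k g) [LieRing.IsNilpotent h]
    (ν : (h →ₗ[k] k) → ℝ)
    (hν : ∀ χ₁ χ₂ : h →ₗ[k] k, ν (χ₁ + χ₂) = ν χ₁ + ν χ₂)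
    (K Kp : ℝ → Submodule k (LaurentPolynomial k ⊗[k] g))
    (hK : ∀ r : ℝ, K r =
      ⨆ (χ : h →ₗ[k] k) (i : ℤ) (_ : ν χ + (i : ℝ) ≥ r),
        ((LieAlgebra.rootSpace h ⇑χ : LieSubmodule k h g) : Submodule k g).map
          (TensorProduct.mk k (LaurentPolynomial k) g (LaurentPolynomial.T i)))
    (hKp : ∀ r : ℝ, Kp r =
      ⨆ (χ : h →ₗ[k] k) (i : ℤ) (_ : ν χ + (i : ℝ) > r),
        ((LieAlgebra.rootSpace h ⇑χ : LieSubmodule k h g) : Submodule k g).map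
          (TensorProduct.mk k (LaurentPolynomial k) g (LaurentPolynomial.T i))) :
    (∀ r s : ℝ, ∀ x ∈ K r, ∀ y ∈ K s, ⁅x, y⁆ ∈ K (r + s)) ∧
    (∀ r s : ℝ, ∀ x ∈ K r, ∀ y ∈ Kp s, ⁅x, y⁆ ∈ Kp (r + s)) ∧
    (∀ r : ℝ, 0 ≤ r → ∀ x ∈ K r, ∀ y ∈ K r, ⁅x, y⁆ ∈ K r) ∧
    (∀ r : ℝ, 0 ≤ r → ∀ x ∈ Kp r, ∀ y ∈ Kp r, ⁅x, y⁆ ∈ Kp r) ∧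
    (∀ x ∈ K 0, ∀ y ∈ Kp 0, ⁅x, y⁆ ∈ Kp 0) := by
  refine ⟨?_, ?_, ?_, ?_, ?_⟩
  · intro r s x hx y hy
    rw [hK] at hx hy ⊢
    refine stmt3_aux h _ _ _ ?_ hx hy
    intro χ₁ i χ₂ j hp hq
    rw [hν]; push_cast; linarith
  · intro r s x hx y hy
    rw [hK] at hx; rw [hKp] at hy ⊢
    refine stmt3_aux h _ _ _ ?_ hx hy
    intro χ₁ i χ₂ j hp hq
    rw [hν]; push_cast; linarith
  · intro r hr x hx y hy
    rw [hK] at hx hy ⊢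
    refine stmt3_aux h _ _ _ ?_ hx hy
    intro χ₁ i χ₂ j hp hq
    rw [hν]; push_cast; linarith
  · intro r hr x hx y hy
    rw [hKp] at hx hy ⊢
    refine stmt3_aux h _ _ _ ?_ hx hy
    intro χ₁ i χ₂ j hp hq
    rw [hν]; push_cast; linarith
  · intro x hx y hy
    rw [hK] at hx; rw [hKp] at hy ⊢
    refine stmt3_aux h _ _ _ ?_ hx hy
    intro χ₁ i χ₂ j hp hq
    rw [hν]; push_cast; linarith
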